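/- For all positive reals a, b, c, d, we have (d/b − c/a)(b − a) ≤ −(min(c,d))·(log(b/√d) − log(a/√c))² + (√d − √c)². -/

import Mathlib

-- auxiliary lemma: for x ≥ 1, 2 log x ≤ x - 1/x
lemma aux_A (x : ℝ) (hx : 1 ≤ x) : 2 * Real.log x ≤ x - 1/x := by
  have key : MonotoneOn (fun y : ℝ => y - 1/y - 2 * Real.log y) (Set.Ici 1) := by
    apply monotoneOn_of_deriv_nonneg (convex_Ici 1)
    · apply ContinuousOn.sub
      · apply ContinuousOn.sub continuousOn_id
        exact ContinuousOn.div continuousOn_const continuousOn_id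
          (fun y hy => by simp at hy; linarith)
      · exact ContinuousOn.mul continuousOn_const
          (Real.continuousOn_log.mono (fun y hy => by simp at hy ⊢; linarith))
    · intro y hy
      rw [interior_Ici] at hy
      simp at hy
      have hy0 : y ≠ 0 := by linarith
      have h1 : HasDerivAt (fun z : ℝ => z - 1/z - 2 * Real.log z)
          (1 - (-(y^2)⁻¹) - 2 * y⁻¹) y := by
        have := ((hasDerivAt_id y).sub ((hasDerivAt_inv hy0))).sub
          ((Real.hasDerivAt_log hy0).const_mul 2)
        simpa [one_div, mul_comm, Pi.sub_def] using this
      exact h1.differentiableAt.differentiableWithinAt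
    · intro y hy
      rw [interior_Ici] at hy
      simp at hy
      have hy0 : y ≠ 0 := by linarith
      have h1 : HasDerivAt (fun z : ℝ => z - 1/z - 2 * Real.log z)
          (1 - (-(y^2)⁻¹) - 2 * y⁻¹) y := by
        have := ((hasDerivAt_id y).sub ((hasDerivAt_inv hy0))).sub
          ((Real.hasDerivAt_log hy0).const_mul 2)
        simpa [one_div, mul_comm, Pi.sub_def] using this
      rw [h1.deriv]
      have : 1 - (-(y^2)⁻¹) - 2 * y⁻¹ = (1 - y⁻¹)^2 := by
        field_simp
        ring
      rw [this]
      positivity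
  have h := key (Set.self_mem_Ici) (Set.mem_Ici.mpr hx) hx
  simp [Real.log_one] at h
  rw [one_div]
  linarith

-- (log t)^2 ≤ t + 1/t - 2 for 1 ≤ t
lemma aux_B1 (t : ℝ) (ht : 1 ≤ t) : (Real.log t)^2 ≤ t + 1/t - 2 := by
  have ht0 : 0 < t := by linarith
  set x := Real.sqrt t with hxdef
  have hx1 : 1 ≤ x := by
    rw [hxdef]
    exact Real.one_le_sqrt.mpr ht
  have hx0 : 0 < x := by linarith
  have hA := aux_A x hx1
  have hlog : Real.log t = 2 * Real.log x := by
    rw [hxdef, Real.log_sqrt ht0.le]; ring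
  have hlognn : 0 ≤ 2 * Real.log x := by
    have := Real.log_nonneg hx1
    linarith
  have hsq : (2 * Real.log x)^2 ≤ (x - 1/x)^2 := by
    apply pow_le_pow_left₀ hlognn hA
  have hx2 : x^2 = t := Real.sq_sqrt ht0.le
  rw [hlog]
  calc (2 * Real.log x)^2 ≤ (x - 1/x)^2 := hsq
    _ = x^2 + 1/x^2 - 2 := by field_simp; ring
    _ = t + 1/t - 2 := by rw [hx2]

-- (log t)^2 ≤ t + 1/t - 2 for 0 < t
lemma aux_B (t : ℝ) (ht : 0 < t) : (Real.log t)^2 ≤ t + 1/t - 2 := by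
  rcases le_total 1 t with h | h
  · exact aux_B1 t h
  · have h1 : 1 ≤ 1/t := by
      rw [le_div_iff₀ ht]; linarith
    have := aux_B1 (1/t) h1
    rw [Real.log_div one_ne_zero ht.ne', Real.log_one] at this
    have h2 : 1/(1/t) = t := by field_simp
    rw [h2] at this
    nlinarith [this]

theorem stmt_0 (a b c d : ℝ) (ha : 0 < a) (hb : 0 < b) (hc : 0 < c) (hd : 0 < d) :
    (d / b - c / a) * (b - a) ≤
      -(min c d) * (Real.log (b / Real.sqrt d) - Real.log (a / Real.sqrt c)) ^ 2
        + (Real.sqrt d - Real.sqrt c) ^ 2 := by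
  set sc := Real.sqrt c with hscdef
  set sd := Real.sqrt d with hsddef
  have hsc : 0 < sc := Real.sqrt_pos.mpr hc
  have hsd : 0 < sd := Real.sqrt_pos.mpr hd
  have hsc2 : sc^2 = c := Real.sq_sqrt hc.le
  have hsd2 : sd^2 = d := Real.sq_sqrt hd.le
  set t := b * sc / (a * sd) with htdef
  have ht : 0 < t := by positivity
  -- L = log t
  have hL : Real.log (b / sd) - Real.log (a / sc) = Real.log t := by
    rw [htdef, Real.log_div hb.ne' hsd.ne', Real.log_div ha.ne' hsc.ne',
      Real.log_div (by positivity) (by positivity),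
      Real.log_mul hb.ne' hsc.ne', Real.log_mul ha.ne' hsd.ne']
    ring
  rw [hL]
  have hB := aux_B t ht
  -- min c d ≤ sc * sd
  have hmin : min c d ≤ sc * sd := by
    rcases le_total c d with h | h
    · rw [min_eq_left h]
      have : sc ≤ sd := Real.sqrt_le_sqrt h
      nlinarith
    · rw [min_eq_right h]
      have : sd ≤ sc := Real.sqrt_le_sqrt h
      nlinarith
  have hminpos : 0 < min c d := lt_min hc hd
  have hrhs : 0 ≤ t + 1/t - 2 := by nlinarith [sq_nonneg (t - 1)]
  have hstep : (min c d) * (Real.log t)^2 ≤ sc * sd * (t + 1/t - 2) := by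
    calc (min c d) * (Real.log t)^2 ≤ (min c d) * (t + 1/t - 2) := by nlinarith
      _ ≤ sc * sd * (t + 1/t - 2) := by nlinarith
  -- sc*sd*t = b*c/a, sc*sd/t = a*d/b
  have h1 : sc * sd * t = b * c / a := by
    rw [htdef, ← hsc2]; field_simp
  have h2 : sc * sd * (1/t) = a * d / b := by
    rw [htdef, ← hsd2]; field_simp
  have hexp : sc * sd * (t + 1/t - 2) = b*c/a + a*d/b - 2*(sc*sd) := by
    rw [mul_sub, mul_add, h1, h2]; ring
  rw [hexp] at hstep
  have key : (d / b - c / a) * (b - a) = c + d - (a*d/b + b*c/a) := by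
    field_simp; ring
  rw [key]
  nlinarith [hstep, hsc2, hsd2]
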